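/- arXiv:1609.01826 — 8 statements merged into one kernel-verified Lean document; each statement's English description precedes it below -/
import Mathlib

section
/- For all positive integers M and N and every cache-size pair (μ_R, μ_T) in the feasible region F, the LP value satisfies τ_u(μ_R, μ_T) ≤ 3 · τ_l(μ_R). (Multiplicative gap between the achievable NDT and the NDT lower bound is at most 3.) -/
open Finset

/-- The index set of integer points: `A = {(m,n) : m,n ∈ {0,1,2,3}, m + 3n ≥ 3}`. -/
def idxA : Finset (ℕ × ℕ) :=
  (Finset.range 4 ×ˢ Finset.range 4).filter (fun p => 3 ≤ p.1 + 3 * p.2)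

/-- The per-user DoF values `d_{mn}(M,N)` of the paper. For `m = 3` the value is
irrelevant (the objective coefficient is zero) and is set to `1`. -/
noncomputable def dof (M N : ℕ) (m n : ℕ) : ℝ :=
  let Mr : ℝ := M
  let Nr : ℝ := N
  let kminus : ℝ := min Mr Nr
  let kplus : ℝ := max Mr Nr
  let ξ : ℝ := ((⌈kminus / (kplus - kminus)⌉ : ℤ) : ℝ)
  match m, n with
  | 0, 1 => if M = N then kminus / 2
            else min (kminus / (2 - 1/ξ)) (kplus / (2 + 1/ξ))
  | 0, 2 => if Nr/Mr ≤ 2/3 then Nr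
            else if Nr/Mr ≤ 5/3 then 2*Mr/3
            else if Nr/Mr ≤ 5/2 then 2*Nr/5
            else Mr
  | 0, 3 => min Mr Nr
  | 1, 1 => if Nr/Mr ≤ 1 then 6*Nr/7
            else if Nr/Mr ≤ 9/7 then 6*Mr/7
            else if Nr/Mr ≤ 3 then 2*Nr/3
            else 2*Mr
  | 1, 2 => if Nr/Mr ≤ 1 then Nr
            else if Nr/Mr ≤ 3/2 then Mr
            else if Nr/Mr ≤ 3 then 2*Nr/3
            else 2*Mr
  | 1, 3 => min Nr (2*Mr)
  | 2, _ => min Nr (3*Mr)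
  | _, _ => 1

/-- The feasible cache-size region `F`. -/
def FeasRegion (muR muT : ℝ) : Prop :=
  0 ≤ muR ∧ muR ≤ 1 ∧ 0 ≤ muT ∧ muT ≤ 1 ∧ 1 ≤ muR + 3*muT

/-- The LP value `τ_u(μ_R, μ_T)`. -/
noncomputable def tauU (M N : ℕ) (muR muT : ℝ) : ℝ :=
  sInf {t : ℝ | ∃ β : ℕ × ℕ → ℝ,
    (∀ p ∈ idxA, 0 ≤ β p ∧ β p ≤ 1) ∧
    (∑ p ∈ idxA, β p) = 1 ∧
    (∑ p ∈ idxA, β p * (p.1 : ℝ) / 3) ≤ muR ∧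
    (∑ p ∈ idxA, β p * (p.2 : ℝ) / 3) ≤ muT ∧
    t = ∑ p ∈ idxA, β p * (1 - (p.1 : ℝ)/3) / dof M N p.1 p.2}

/-- The lower-bound function
`τ_l(μ_R) = max{ (1/N)(1−μ_R), max_{s∈{1,2,3}} (s/(3M))(1 − s μ_R) }`. -/
noncomputable def tauL (M N : ℕ) (muR : ℝ) : ℝ :=
  max ((1/(N:ℝ)) * (1 - muR))
    (max ((1/(3*(M:ℝ))) * (1 - muR))
      (max ((2/(3*(M:ℝ))) * (1 - 2*muR)) ((3/(3*(M:ℝ))) * (1 - 3*muR))))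

lemma d01_ge (M N : ℕ) (hM : 0 < M) (hN : 0 < N) :
    min (M:ℝ) ((N:ℝ)/3) ≤ dof M N 0 1 := by
  have hMr : (0:ℝ) < M := by exact_mod_cast hM
  have hNr : (0:ℝ) < N := by exact_mod_cast hN
  rw [show dof M N 0 1 =
    (if M = N then (min (M:ℝ) (N:ℝ)) / 2
     else min ((min (M:ℝ) N) / (2 - 1/((⌈min (M:ℝ) N / (max (M:ℝ) N - min (M:ℝ) N)⌉ : ℤ) : ℝ)))
              ((max (M:ℝ) N) / (2 + 1/((⌈min (M:ℝ) N / (max (M:ℝ) N - min (M:ℝ) N)⌉ : ℤ) : ℝ)))) from rfl]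
  by_cases hMN : M = N
  · subst hMN
    rw [if_pos rfl]
    have h1 : min (M:ℝ) ((M:ℝ)/3) = (M:ℝ)/3 := min_eq_right (by linarith)
    have h2 : min (M:ℝ) (M:ℝ) = (M:ℝ) := min_self _
    rw [h1, h2]; linarith
  · rw [if_neg hMN]
    set x : ℝ := ((⌈min (M:ℝ) N / (max (M:ℝ) N - min (M:ℝ) N)⌉ : ℤ) : ℝ) with hxdef
    have hne : (M:ℝ) ≠ (N:ℝ) := by exact_mod_cast hMN
    have hminmax : min (M:ℝ) N < max (M:ℝ) N := min_lt_max.mpr hne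
    have hminpos : (0:ℝ) < min (M:ℝ) N := lt_min hMr hNr
    have hxpos : (0:ℝ) < min (M:ℝ) N / (max (M:ℝ) N - min (M:ℝ) N) :=
      div_pos hminpos (by linarith)
    have hcz : (0:ℤ) < ⌈min (M:ℝ) N / (max (M:ℝ) N - min (M:ℝ) N)⌉ := Int.ceil_pos.mpr hxpos
    have hcz1 : (1:ℤ) ≤ ⌈min (M:ℝ) N / (max (M:ℝ) N - min (M:ℝ) N)⌉ := by omega
    have hx1 : (1:ℝ) ≤ x := by
      rw [hxdef, show (1:ℝ) = ((1:ℤ):ℝ) by norm_num, Int.cast_le]; exact hcz1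
    have hxinv : 1/x ≤ 1 := by
      rw [div_le_one (by linarith)]; exact hx1
    have hxinvpos : 0 < 1/x := by positivity
    have hden1 : (0:ℝ) < 2 - 1/x := by linarith
    apply le_min
    · -- first component
      rcases lt_or_gt_of_ne hne with hlt | hgt
      · -- M < N
        have hmin : min (M:ℝ) N = M := min_eq_left hlt.le
        have hmax : max (M:ℝ) N = N := max_eq_right hlt.le
        rw [hmin]
        by_cases h2 : (N:ℝ) ≥ 2*M
        · -- ξ = 1, component = M
          have hle1 : min (M:ℝ) N / (max (M:ℝ) N - min (M:ℝ) N) ≤ 1 := by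
            rw [hmin, hmax, div_le_one (by linarith)]; linarith
          have hceil1 : ⌈min (M:ℝ) N / (max (M:ℝ) N - min (M:ℝ) N)⌉ ≤ 1 :=
            Int.ceil_le.mpr (by simpa using hle1)
          have hx_eq : x = 1 := by
            rw [hxdef, show (1:ℝ) = ((1:ℤ):ℝ) by norm_num, Int.cast_inj]; omega
          rw [hx_eq]
          have he : (M:ℝ)/(2 - 1/1) = M := by norm_num
          rw [he]; exact min_le_left _ _
        · -- N < 2M
          push_neg at h2
          have hd : (0:ℝ) < (N:ℝ) - M := by linarith
          have hceil : x < min (M:ℝ) N / (max (M:ℝ) N - min (M:ℝ) N) + 1 := Int.ceil_lt_add_one _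
          rw [hmin, hmax] at hceil
          have heq : (M:ℝ)/((N:ℝ)-M) + 1 = (N:ℝ)/((N:ℝ)-M) := by field_simp; ring
          rw [heq] at hceil
          have hxb : x * ((N:ℝ) - M) < N := (lt_div_iff₀ hd).mp hceil
          have hNx : (N:ℝ) - M ≤ (N:ℝ)/x := by
            rw [le_div_iff₀ (by linarith : (0:ℝ) < x)]; nlinarith
          have hstep : (N:ℝ)/3 ≤ (M:ℝ)/(2 - 1/x) := by
            rw [div_le_div_iff₀ (by norm_num) hden1]
            have hx0 : (0:ℝ) < x := by linarith
            have : (N:ℝ) * (1/x) = (N:ℝ)/x := by ring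
            nlinarith
          exact le_trans (min_le_right _ _) hstep
      · -- M > N
        have hmin : min (M:ℝ) N = N := min_eq_right hgt.le
        rw [hmin]
        have hstep : (N:ℝ)/3 ≤ (N:ℝ)/(2 - 1/x) := by
          rw [div_le_div_iff₀ (by norm_num) hden1]
          nlinarith
        exact le_trans (min_le_right _ _) hstep
    · -- second component
      have h1 : min (M:ℝ) ((N:ℝ)/3) ≤ (N:ℝ)/3 := min_le_right _ _
      have h2 : (N:ℝ)/3 ≤ max (M:ℝ) N / (2 + 1/x) := by
        rw [div_le_div_iff₀ (by norm_num) (by linarith)]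
        have : (N:ℝ) ≤ max (M:ℝ) N := le_max_right _ _
        nlinarith
      linarith

lemma dof_nonneg (M N : ℕ) (hM : 0 < M) (hN : 0 < N) (m n : ℕ)
    (hm : m < 4) (hn : n < 4) : 0 ≤ dof M N m n := by
  have hMr : (0:ℝ) < M := by exact_mod_cast hM
  have hNr : (0:ℝ) < N := by exact_mod_cast hN
  have hd01 : (0:ℝ) ≤ dof M N 0 1 := by
    have h1 := d01_ge M N hM hN
    have h2 : (0:ℝ) ≤ min (M:ℝ) ((N:ℝ)/3) := le_min hMr.le (by linarith)
    linarith
  interval_cases m <;> interval_cases n <;>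
    first
      | exact hd01
      | exact zero_le_one
      | { show (0:ℝ) ≤ min (M:ℝ) (N:ℝ); exact le_min hMr.le hNr.le }
      | { show (0:ℝ) ≤ min (N:ℝ) (2*(M:ℝ)); exact le_min hNr.le (by linarith) }
      | { show (0:ℝ) ≤ min (N:ℝ) (3*(M:ℝ)); exact le_min hNr.le (by linarith) }
      | { show (0:ℝ) ≤ if (N:ℝ)/(M:ℝ) ≤ 2/3 then (N:ℝ)
            else if (N:ℝ)/(M:ℝ) ≤ 5/3 then 2*(M:ℝ)/3
            else if (N:ℝ)/(M:ℝ) ≤ 5/2 then 2*(N:ℝ)/5 else (M:ℝ)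
          split_ifs <;> positivity }
      | { show (0:ℝ) ≤ if (N:ℝ)/(M:ℝ) ≤ 1 then 6*(N:ℝ)/7
            else if (N:ℝ)/(M:ℝ) ≤ 9/7 then 6*(M:ℝ)/7
            else if (N:ℝ)/(M:ℝ) ≤ 3 then 2*(N:ℝ)/3 else 2*(M:ℝ)
          split_ifs <;> positivity }
      | { show (0:ℝ) ≤ if (N:ℝ)/(M:ℝ) ≤ 1 then (N:ℝ)
            else if (N:ℝ)/(M:ℝ) ≤ 3/2 then (M:ℝ)
            else if (N:ℝ)/(M:ℝ) ≤ 3 then 2*(N:ℝ)/3 else 2*(M:ℝ)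
          split_ifs <;> positivity }

/-- For all positive integers `M`, `N` and every `(μ_R, μ_T)` in the
feasible region, the LP value satisfies `τ_u(μ_R, μ_T) ≤ 3 · τ_l(μ_R)`. -/
theorem multiplicative_gap_le_three (M N : ℕ) (hM : 0 < M) (hN : 0 < N)
    (muR muT : ℝ) (h : FeasRegion muR muT) :
    tauU M N muR muT ≤ 3 * tauL M N muR := by
  obtain ⟨h0R, h1R, h0T, h1T, hsum⟩ := h
  have hMr : (0:ℝ) < M := by exact_mod_cast hM
  have hNr : (0:ℝ) < N := by exact_mod_cast hN
  have hd01 := d01_ge M N hM hN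
  have hminpos : (0:ℝ) < min (M:ℝ) ((N:ℝ)/3) := lt_min hMr (by linarith)
  have hd01pos : 0 < dof M N 0 1 := lt_of_lt_of_le hminpos hd01
  have hmem30 : ((3:ℕ),(0:ℕ)) ∈ idxA := by decide
  have hmem01 : ((0:ℕ),(1:ℕ)) ∈ idxA := by decide
  set S := {t : ℝ | ∃ β : ℕ × ℕ → ℝ,
    (∀ p ∈ idxA, 0 ≤ β p ∧ β p ≤ 1) ∧
    (∑ p ∈ idxA, β p) = 1 ∧
    (∑ p ∈ idxA, β p * (p.1 : ℝ) / 3) ≤ muR ∧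
    (∑ p ∈ idxA, β p * (p.2 : ℝ) / 3) ≤ muT ∧
    t = ∑ p ∈ idxA, β p * (1 - (p.1 : ℝ)/3) / dof M N p.1 p.2} with hS
  have hmem : (1 - muR) / dof M N 0 1 ∈ S := by
    refine ⟨fun p => (if p = ((3:ℕ),(0:ℕ)) then muR else 0) +
        (if p = ((0:ℕ),(1:ℕ)) then 1 - muR else 0), ?_, ?_, ?_, ?_, ?_⟩
    · intro p _
      dsimp only
      constructor <;> split_ifs <;> simp_all
    · simp only [Finset.sum_add_distrib, Finset.sum_ite_eq', hmem30, hmem01, if_true]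
      ring
    · simp only [add_mul, ite_mul, zero_mul, add_div, Finset.sum_div, ← Finset.sum_div,
        Finset.sum_add_distrib, Finset.sum_ite_eq', hmem30, hmem01, if_true]
      norm_num
    · simp only [add_mul, ite_mul, zero_mul, Finset.sum_add_distrib, ← Finset.sum_div,
        Finset.sum_ite_eq', hmem30, hmem01, if_true]
      push_cast
      norm_num
      linarith
    · simp only [add_mul, ite_mul, zero_mul, add_div, ite_div, zero_div,
        Finset.sum_add_distrib, Finset.sum_ite_eq', hmem30, hmem01, if_true]
      push_cast
      norm_num
  have hbdd : BddBelow S := by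
    refine ⟨0, fun t ht => ?_⟩
    obtain ⟨β, hβ, -, -, -, hteq⟩ := ht
    rw [hteq]
    apply Finset.sum_nonneg
    intro p hp
    have hp' : p.1 < 4 ∧ p.2 < 4 := by
      simp only [idxA, Finset.mem_filter, Finset.mem_product, Finset.mem_range] at hp
      exact ⟨hp.1.1, hp.1.2⟩
    have h13 : (p.1 : ℝ) ≤ 3 := by exact_mod_cast Nat.lt_succ_iff.mp hp'.1
    apply div_nonneg
    · exact mul_nonneg (hβ p hp).1 (by linarith)
    · exact dof_nonneg M N hM hN p.1 p.2 hp'.1 hp'.2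
  have hle1 : tauU M N muR muT ≤ (1 - muR) / dof M N 0 1 := csInf_le hbdd hmem
  have hle2 : (1 - muR) / dof M N 0 1 ≤ (1 - muR) / min (M:ℝ) ((N:ℝ)/3) :=
    div_le_div_of_nonneg_left (by linarith) hminpos hd01
  refine le_trans hle1 (le_trans hle2 ?_)
  rcases le_total ((M:ℝ)) ((N:ℝ)/3) with hc | hc
  · rw [min_eq_left hc]
    have hL : (1/(3*(M:ℝ))) * (1 - muR) ≤ tauL M N muR :=
      le_trans (le_max_left _ _) (le_max_right _ _)
    have : (1 - muR) / (M:ℝ) = 3 * ((1/(3*(M:ℝ))) * (1 - muR)) := by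
      field_simp
    rw [this]
    linarith
  · rw [min_eq_right hc]
    have hL : (1/(N:ℝ)) * (1 - muR) ≤ tauL M N muR := le_max_left _ _
    have : (1 - muR) / ((N:ℝ)/3) = 3 * ((1/(N:ℝ)) * (1 - muR)) := by
      field_simp
    rw [this]
    linarith
end

section
/- If N ≤ M/3, then for every (μ_R, μ_T) in the feasible region F, the LP value satisfies τ_u(μ_R, μ_T) = (1/N)(1 − μ_R), and this coincides with the lower-bound function: τ_u(μ_R,μ_T) = τ_l(μ_R). -/
open Finset

set_option maxHeartbeats 1000000 in
/-- If `N ≤ M/3`, then for every `(μ_R, μ_T)` in the feasible region,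
`τ_u(μ_R, μ_T) = (1/N)(1 − μ_R)`, and this coincides with the lower bound `τ_l(μ_R)`. -/
theorem tauU_eq_case_N_le_M_div_three (M N : ℕ) (hM : 0 < M) (hN : 0 < N)
    (hNM : (N : ℝ) ≤ (M : ℝ) / 3)
    (muR muT : ℝ) (h : FeasRegion muR muT) :
    tauU M N muR muT = (1/(N:ℝ)) * (1 - muR) ∧
    tauU M N muR muT = tauL M N muR := by
  obtain ⟨hR0, hR1, hT0, hT1, hRT⟩ := h
  have hN1 : (1:ℝ) ≤ N := by exact_mod_cast hN
  have hM1 : (1:ℝ) ≤ M := by exact_mod_cast hM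
  have h3 : 3*(N:ℝ) ≤ M := by linarith
  have hNpos : (0:ℝ) < N := by linarith
  -- dof computations
  have hd01 : dof M N 0 1 = (N:ℝ) := by
    have hlt : (N:ℝ) < M := by linarith
    have hne : M ≠ N := by
      intro hEq; rw [hEq] at hlt; exact lt_irrefl _ hlt
    have hmin : min (M:ℝ) (N:ℝ) = N := min_eq_right hlt.le
    have hmax : max (M:ℝ) (N:ℝ) = M := max_eq_left hlt.le
    have hceil : (⌈(N:ℝ) / ((M:ℝ) - N)⌉ : ℤ) = 1 := by
      rw [Int.ceil_eq_iff]
      constructor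
      · have h0 : (0:ℝ) < (N:ℝ)/((M:ℝ)-N) := div_pos (by linarith) (by linarith)
        push_cast
        linarith
      · push_cast
        rw [div_le_one (by linarith)]
        linarith
    simp only [dof, hmin, hmax, if_neg hne, hceil]
    norm_num
    exact hNM
  have hr1 : (N:ℝ)/M ≤ 2/3 := by rw [div_le_iff₀ (by linarith)]; linarith
  have hr2 : (N:ℝ)/M ≤ 1 := by rw [div_le_one (by linarith)]; linarith
  have hd02 : dof M N 0 2 = (N:ℝ) := by simp only [dof, if_pos hr1]
  have hd03 : dof M N 0 3 = (N:ℝ) := by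
    simp only [dof]; exact min_eq_right (by linarith)
  have hd11 : dof M N 1 1 = 6*(N:ℝ)/7 := by simp only [dof, if_pos hr2]
  have hd12 : dof M N 1 2 = (N:ℝ) := by simp only [dof, if_pos hr2]
  have hd13 : dof M N 1 3 = (N:ℝ) := by
    simp only [dof]; exact min_eq_left (by linarith)
  have hd2 : ∀ n, dof M N 2 n = (N:ℝ) := by
    intro n; simp only [dof]; exact min_eq_left (by linarith)
  -- the witness β
  set β : ℕ × ℕ → ℝ := fun p => if p = (3,0) then muR else if p = (0,1) then 1 - muR else 0 with hβ
  have hmem : (1/(N:ℝ)) * (1 - muR) ∈ {t : ℝ | ∃ β : ℕ × ℕ → ℝ,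
      (∀ p ∈ idxA, 0 ≤ β p ∧ β p ≤ 1) ∧
      (∑ p ∈ idxA, β p) = 1 ∧
      (∑ p ∈ idxA, β p * (p.1 : ℝ) / 3) ≤ muR ∧
      (∑ p ∈ idxA, β p * (p.2 : ℝ) / 3) ≤ muT ∧
      t = ∑ p ∈ idxA, β p * (1 - (p.1 : ℝ)/3) / dof M N p.1 p.2} := by
    refine ⟨β, ?_, ?_, ?_, ?_, ?_⟩
    · intro p _
      simp only [hβ]
      split
      · exact ⟨hR0, hR1⟩
      · split
        · constructor <;> linarith
        · norm_num
    · simp [hβ, idxA, Finset.sum_filter, Finset.sum_product, Finset.sum_range_succ, Prod.ext_iff]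
    · simp [hβ, idxA, Finset.sum_filter, Finset.sum_product, Finset.sum_range_succ, Prod.ext_iff]
    · have : (∑ p ∈ idxA, β p * (p.2 : ℝ) / 3) = (1-muR)/3 := by
        simp [hβ, idxA, Finset.sum_filter, Finset.sum_product, Finset.sum_range_succ, Prod.ext_iff]
        try ring
      rw [this]; linarith
    · have : (∑ p ∈ idxA, β p * (1 - (p.1 : ℝ)/3) / dof M N p.1 p.2) = (1-muR)/(N:ℝ) := by
        simp [hβ, idxA, Finset.sum_filter, Finset.sum_product, Finset.sum_range_succ, Prod.ext_iff, hd01]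
        try ring
      rw [this]; ring
  -- lower bound
  have hlb : ∀ t ∈ {t : ℝ | ∃ β : ℕ × ℕ → ℝ,
      (∀ p ∈ idxA, 0 ≤ β p ∧ β p ≤ 1) ∧
      (∑ p ∈ idxA, β p) = 1 ∧
      (∑ p ∈ idxA, β p * (p.1 : ℝ) / 3) ≤ muR ∧
      (∑ p ∈ idxA, β p * (p.2 : ℝ) / 3) ≤ muT ∧
      t = ∑ p ∈ idxA, β p * (1 - (p.1 : ℝ)/3) / dof M N p.1 p.2},
      (1/(N:ℝ)) * (1 - muR) ≤ t := by
    rintro t ⟨γ, hγ01, hγsum, hγR, _, ht⟩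
    have key : ∀ p ∈ idxA, γ p * (1 - (p.1 : ℝ)/3) / (N:ℝ) ≤
        γ p * (1 - (p.1 : ℝ)/3) / dof M N p.1 p.2 := by
      intro p hp
      have hγp := (hγ01 p hp).1
      fin_cases hp <;>
        simp only [hd01, hd02, hd03, hd11, hd12, hd13, hd2] <;>
        first
          | exact le_rfl
          | (rw [div_le_div_iff₀ hNpos (by linarith)]; nlinarith [mul_nonneg hγp hNpos.le])
          | norm_num
    calc (1/(N:ℝ)) * (1 - muR)
        ≤ (1/(N:ℝ)) * (1 - ∑ p ∈ idxA, γ p * (p.1 : ℝ) / 3) := by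
          apply mul_le_mul_of_nonneg_left _ (by positivity)
          linarith
      _ = ∑ p ∈ idxA, γ p * (1 - (p.1 : ℝ)/3) / (N:ℝ) := by
          have hsplit : ∑ p ∈ idxA, γ p * (1 - (p.1 : ℝ)/3) / (N:ℝ)
              = (∑ p ∈ idxA, (γ p - γ p * (p.1 : ℝ) / 3)) / (N:ℝ) := by
            rw [← Finset.sum_div]
            exact congrArg (· / (N:ℝ)) (Finset.sum_congr rfl fun p _ => by ring)
          rw [hsplit, Finset.sum_sub_distrib, hγsum]
          ring
      _ ≤ ∑ p ∈ idxA, γ p * (1 - (p.1 : ℝ)/3) / dof M N p.1 p.2 :=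
          Finset.sum_le_sum key
      _ = t := ht.symm
  have hset : tauU M N muR muT = (1/(N:ℝ)) * (1 - muR) := by
    apply le_antisymm
    · exact csInf_le ⟨(1/(N:ℝ)) * (1 - muR), hlb⟩ hmem
    · exact le_csInf ⟨_, hmem⟩ hlb
  refine ⟨hset, hset.trans ?_⟩
  have h1R : 0 ≤ 1 - muR := by linarith
  have key2 : ∀ s : ℝ, 1 ≤ s → s ≤ 3 → (s/(3*(M:ℝ))) * (1 - s*muR) ≤ (1/(N:ℝ)) * (1 - muR) := by
    intro s hs1 hs3
    rw [div_mul_eq_mul_div, div_mul_eq_mul_div, div_le_div_iff₀ (by linarith) hNpos]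
    have h1 : s * (1 - s*muR) ≤ s * (1 - muR) := by
      nlinarith [mul_nonneg (mul_nonneg hR0 (by linarith : (0:ℝ) ≤ s - 1)) (by linarith : (0:ℝ) ≤ s)]
    have h1N := mul_le_mul_of_nonneg_right h1 hNpos.le
    have h2 : s * (1 - muR) * (N:ℝ) ≤ 3 * (N:ℝ) * (1 - muR) := by
      nlinarith [mul_nonneg (mul_nonneg (by linarith : (0:ℝ) ≤ 3 - s) hNpos.le) h1R]
    have h3' := mul_le_mul_of_nonneg_right h3 h1R
    have h4' : (M:ℝ) * (1 - muR) ≤ 3 * (M:ℝ) * (1 - muR) := by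
      nlinarith [mul_nonneg (by linarith : (0:ℝ) ≤ (M:ℝ)) h1R]
    linarith
  have e1 := key2 1 (le_refl 1) (by norm_num)
  rw [one_mul] at e1
  have e2 := key2 2 (by norm_num) (by norm_num)
  have e3 := key2 3 (by norm_num) (le_refl 3)
  unfold tauL
  exact (max_eq_left (max_le e1 (max_le e2 e3))).symm
end

section
/- If N ≤ M, then for every (μ_R, μ_T) in the feasible region F with μ_R + μ_T ≥ 1, the LP value satisfies τ_u(μ_R, μ_T) = (1/N)(1 − μ_R) = τ_l(μ_R). -/
open Finset

lemma dofb (M N : ℕ) (hM : 0 < M) (hN : 0 < N) (hNM : N ≤ M)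
    (p : ℕ × ℕ) (hp : p ∈ idxA) (hp3 : p.1 ≠ 3) :
    0 < dof M N p.1 p.2 ∧ dof M N p.1 p.2 ≤ (N:ℝ) := by
  have hMr : (0:ℝ) < M := by exact_mod_cast hM
  have hNr : (0:ℝ) < N := by exact_mod_cast hN
  have hNMr : (N:ℝ) ≤ M := by exact_mod_cast hNM
  have hdiv : (N:ℝ)/M ≤ 1 := (div_le_one hMr).mpr hNMr
  obtain ⟨m, n⟩ := p
  simp only [idxA, Finset.mem_filter, Finset.mem_product, Finset.mem_range] at hp
  obtain ⟨⟨hm, hn⟩, hmn⟩ := hp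
  simp only at hp3
  interval_cases m <;> interval_cases n <;> simp only [dof] <;> try exact absurd hmn (by omega)
  · -- (0,1)
    by_cases hE : M = N
    · simp only [if_pos hE, min_eq_right hNMr]
      constructor
      · positivity
      · linarith
    · simp only [if_neg hE]
      have hlt' : N < M := lt_of_le_of_ne hNM (fun h => hE h.symm)
      have hlt : (N:ℝ) < M := by exact_mod_cast hlt'
      rw [min_eq_right hNMr, max_eq_left hNMr]
      have hpos : (0:ℝ) < (N:ℝ) / ((M:ℝ) - N) := div_pos hNr (by linarith)
      have hceil : 1 ≤ ⌈(N:ℝ) / ((M:ℝ) - N)⌉ := Int.ceil_pos.mpr hpos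
      have hξ : (1:ℝ) ≤ ((⌈(N:ℝ) / ((M:ℝ) - N)⌉ : ℤ) : ℝ) := by exact_mod_cast hceil
      set ξ : ℝ := ((⌈(N:ℝ) / ((M:ℝ) - N)⌉ : ℤ) : ℝ)
      have hξ0 : (0:ℝ) < ξ := by linarith
      have hinv : 1/ξ ≤ 1 := by rw [div_le_one hξ0]; linarith
      have hinv0 : 0 < 1/ξ := by positivity
      constructor
      · apply lt_min
        · exact div_pos hNr (by linarith)
        · exact div_pos hMr (by linarith)
      · calc min ((N:ℝ)/(2-1/ξ)) ((M:ℝ)/(2+1/ξ)) ≤ (N:ℝ)/(2-1/ξ) := min_le_left _ _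
          _ ≤ (N:ℝ)/1 := by apply div_le_div_of_nonneg_left (le_of_lt hNr) (by linarith) (by linarith)
          _ = N := div_one _
  · -- (0,2)
    by_cases h23 : (N:ℝ)/M ≤ 2/3
    · simp only [h23, if_true]; exact ⟨hNr, le_refl _⟩
    · simp only [h23, if_false, hdiv.trans (by norm_num : (1:ℝ) ≤ 5/3), if_true]
      have : 2/3 < (N:ℝ)/M := lt_of_not_ge h23
      have h2M : 2*(M:ℝ)/3 < N := by
        rw [div_lt_div_iff₀ (by norm_num) hMr] at this
        linarith
      exact ⟨by positivity, le_of_lt h2M⟩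
  · -- (0,3)
    rw [min_eq_right hNMr]; exact ⟨hNr, le_refl _⟩
  · -- (1,1)
    simp only [hdiv, if_true]
    constructor
    · positivity
    · linarith
  · -- (1,2)
    simp only [hdiv, if_true]; exact ⟨hNr, le_refl _⟩
  · -- (1,3)
    rw [min_eq_left (by linarith)]; exact ⟨hNr, le_refl _⟩
  · rw [min_eq_left (by linarith)]; exact ⟨hNr, le_refl _⟩
  · rw [min_eq_left (by linarith)]; exact ⟨hNr, le_refl _⟩
  · rw [min_eq_left (by linarith)]; exact ⟨hNr, le_refl _⟩

lemma dof03 (M N : ℕ) (hNM : N ≤ M) : dof M N 0 3 = (N:ℝ) := by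
  simp only [dof]; exact min_eq_right (by exact_mod_cast hNM)

lemma dof12 (M N : ℕ) (hM : 0 < M) (hNM : N ≤ M) : dof M N 1 2 = (N:ℝ) := by
  have hMr : (0:ℝ) < M := by exact_mod_cast hM
  have hNMr : (N:ℝ) ≤ M := by exact_mod_cast hNM
  simp only [dof, (div_le_one hMr).mpr hNMr, if_true]

lemma dof21 (M N : ℕ) (hNM : N ≤ M) : dof M N 2 1 = (N:ℝ) := by
  have hNMr : (N:ℝ) ≤ M := by exact_mod_cast hNM
  have hM0 : (0:ℝ) ≤ M := le_trans (by exact_mod_cast Nat.zero_le N) hNMr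
  simp only [dof]
  exact min_eq_left (by linarith)

lemma dof30 (M N : ℕ) : dof M N 3 0 = 1 := by simp only [dof]

lemma sum_pair {a b : ℕ × ℕ} (ha : a ∈ idxA) (hb : b ∈ idxA) (hab : a ≠ b)
    (x y : ℝ) (f : ℕ × ℕ → ℝ) :
    ∑ p ∈ idxA, ((if p = a then x else 0) + (if p = b then y else 0)) * f p
      = x * f a + y * f b := by
  simp only [add_mul, ite_mul, zero_mul, Finset.sum_add_distrib,
    Finset.sum_ite_eq' idxA, ha, hb, if_true]

lemma mem_pair (M N : ℕ) (muR muT t : ℝ) (a b : ℕ × ℕ)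
    (ha : a ∈ idxA) (hb : b ∈ idxA) (hab : a ≠ b)
    (x y : ℝ) (hx : 0 ≤ x) (hx1 : x ≤ 1) (hy : 0 ≤ y) (hy1 : y ≤ 1) (hxy : x + y = 1)
    (hm : x * ((a.1:ℝ)/3) + y * ((b.1:ℝ)/3) ≤ muR)
    (hn : x * ((a.2:ℝ)/3) + y * ((b.2:ℝ)/3) ≤ muT)
    (hobj : t = x * ((1-(a.1:ℝ)/3)/dof M N a.1 a.2)
              + y * ((1-(b.1:ℝ)/3)/dof M N b.1 b.2)) :
    t ∈ {t : ℝ | ∃ β : ℕ × ℕ → ℝ,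
      (∀ p ∈ idxA, 0 ≤ β p ∧ β p ≤ 1) ∧
      (∑ p ∈ idxA, β p) = 1 ∧
      (∑ p ∈ idxA, β p * (p.1 : ℝ) / 3) ≤ muR ∧
      (∑ p ∈ idxA, β p * (p.2 : ℝ) / 3) ≤ muT ∧
      t = ∑ p ∈ idxA, β p * (1 - (p.1 : ℝ)/3) / dof M N p.1 p.2} := by
  refine ⟨fun p => (if p = a then x else 0) + (if p = b then y else 0), ?_, ?_, ?_, ?_, ?_⟩
  · intro p _
    rcases eq_or_ne p a with rfl | h1
    · simp only [if_pos rfl, if_neg hab, add_zero]; exact ⟨hx, hx1⟩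
    · rcases eq_or_ne p b with rfl | h2
      · simp only [if_neg h1, if_pos rfl, zero_add]; exact ⟨hy, hy1⟩
      · simp only [if_neg h1, if_neg h2, add_zero]; norm_num
  · calc ∑ p ∈ idxA, ((if p = a then x else 0) + (if p = b then y else 0))
        = ∑ p ∈ idxA, ((if p = a then x else 0) + (if p = b then y else 0)) * (fun _ => (1:ℝ)) p := by
          simp
      _ = x * (fun _ => (1:ℝ)) a + y * (fun _ => (1:ℝ)) b := sum_pair ha hb hab x y _
      _ = 1 := by simpa using hxy
  · have e : ∑ p ∈ idxA, ((if p = a then x else 0) + (if p = b then y else 0)) * (p.1:ℝ) / 3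
        = ∑ p ∈ idxA, ((if p = a then x else 0) + (if p = b then y else 0)) * ((p.1:ℝ)/3) :=
      Finset.sum_congr rfl (fun p _ => by ring)
    rw [e, sum_pair ha hb hab x y (fun p => (p.1:ℝ)/3)]
    exact hm
  · have e : ∑ p ∈ idxA, ((if p = a then x else 0) + (if p = b then y else 0)) * (p.2:ℝ) / 3
        = ∑ p ∈ idxA, ((if p = a then x else 0) + (if p = b then y else 0)) * ((p.2:ℝ)/3) :=
      Finset.sum_congr rfl (fun p _ => by ring)
    rw [e, sum_pair ha hb hab x y (fun p => (p.2:ℝ)/3)]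
    exact hn
  · have e : ∑ p ∈ idxA, ((if p = a then x else 0) + (if p = b then y else 0)) * (1 - (p.1:ℝ)/3) / dof M N p.1 p.2
        = ∑ p ∈ idxA, ((if p = a then x else 0) + (if p = b then y else 0)) * ((1 - (p.1:ℝ)/3)/dof M N p.1 p.2) :=
      Finset.sum_congr rfl (fun p _ => by ring)
    rw [e, sum_pair ha hb hab x y (fun p => (1 - (p.1:ℝ)/3)/dof M N p.1 p.2)]
    exact hobj

lemma lower_bound (M N : ℕ) (hM : 0 < M) (hN : 0 < N) (hNM : N ≤ M)
    (muR muT : ℝ) :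
    ∀ t ∈ {t : ℝ | ∃ β : ℕ × ℕ → ℝ,
      (∀ p ∈ idxA, 0 ≤ β p ∧ β p ≤ 1) ∧
      (∑ p ∈ idxA, β p) = 1 ∧
      (∑ p ∈ idxA, β p * (p.1 : ℝ) / 3) ≤ muR ∧
      (∑ p ∈ idxA, β p * (p.2 : ℝ) / 3) ≤ muT ∧
      t = ∑ p ∈ idxA, β p * (1 - (p.1 : ℝ)/3) / dof M N p.1 p.2},
    (1/(N:ℝ)) * (1 - muR) ≤ t := by
  rintro t ⟨β, hβ, hs, hm, _, ht⟩
  have hNr : (0:ℝ) < N := by exact_mod_cast hN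
  have key : ∀ p ∈ idxA,
      β p * (1 - (p.1:ℝ)/3) / (N:ℝ) ≤ β p * (1 - (p.1:ℝ)/3) / dof M N p.1 p.2 := by
    intro p hp
    by_cases h3 : p.1 = 3
    · simp [h3]
    · obtain ⟨hd0, hdN⟩ := dofb M N hM hN hNM p hp h3
      have hm4 : p.1 < 4 := by
        have := hp
        simp only [idxA, Finset.mem_filter, Finset.mem_product, Finset.mem_range] at this
        exact this.1.1
      have hc : (p.1:ℝ) ≤ 3 := by exact_mod_cast Nat.lt_succ_iff.mp hm4
      have hnum : 0 ≤ β p * (1 - (p.1:ℝ)/3) :=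
        mul_nonneg (hβ p hp).1 (by linarith)
      exact div_le_div_of_nonneg_left hnum hd0 hdN
  have h1 : ∑ p ∈ idxA, β p * (1 - (p.1:ℝ)/3) / (N:ℝ) ≤ t := by
    rw [ht]; exact Finset.sum_le_sum key
  have h2 : ∑ p ∈ idxA, β p * (1 - (p.1:ℝ)/3) / (N:ℝ)
      = 1/(N:ℝ) - (∑ p ∈ idxA, β p * (p.1:ℝ) / 3) / (N:ℝ) := by
    have e : ∑ p ∈ idxA, β p * (1 - (p.1:ℝ)/3) / (N:ℝ)
        = ∑ p ∈ idxA, (β p / N - (β p * (p.1:ℝ) / 3) / N) :=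
      Finset.sum_congr rfl (fun p _ => by ring)
    rw [e, Finset.sum_sub_distrib, ← Finset.sum_div, ← Finset.sum_div, hs]
  have h3 : (∑ p ∈ idxA, β p * (p.1:ℝ) / 3) / (N:ℝ) ≤ muR / N :=
    (div_le_div_iff_of_pos_right hNr).mpr hm
  calc (1/(N:ℝ)) * (1 - muR) = 1/(N:ℝ) - muR / N := by ring
    _ ≤ 1/(N:ℝ) - (∑ p ∈ idxA, β p * (p.1:ℝ) / 3) / (N:ℝ) := by linarith
    _ = ∑ p ∈ idxA, β p * (1 - (p.1:ℝ)/3) / (N:ℝ) := h2.symm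
    _ ≤ t := h1

/-- If `N ≤ M`, then for every `(μ_R, μ_T)` in the feasible region with
`μ_R + μ_T ≥ 1`, one has `τ_u(μ_R, μ_T) = (1/N)(1 − μ_R) = τ_l(μ_R)`. -/
theorem tauU_eq_case_N_le_M (M N : ℕ) (hM : 0 < M) (hN : 0 < N)
    (hNM : N ≤ M)
    (muR muT : ℝ) (h : FeasRegion muR muT) (hsum : 1 ≤ muR + muT) :
    tauU M N muR muT = (1/(N:ℝ)) * (1 - muR) ∧
    tauU M N muR muT = tauL M N muR := by
  obtain ⟨h0, h1, hT0, hT1, _⟩ := h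
  have hNr : (0:ℝ) < N := by exact_mod_cast hN
  have hMr : (0:ℝ) < M := by exact_mod_cast hM
  have hNMr : (N:ℝ) ≤ M := by exact_mod_cast hNM
  set t0 := (1/(N:ℝ)) * (1 - muR) with ht0
  -- membership of t0
  have hmem : t0 ∈ {t : ℝ | ∃ β : ℕ × ℕ → ℝ,
      (∀ p ∈ idxA, 0 ≤ β p ∧ β p ≤ 1) ∧
      (∑ p ∈ idxA, β p) = 1 ∧
      (∑ p ∈ idxA, β p * (p.1 : ℝ) / 3) ≤ muR ∧
      (∑ p ∈ idxA, β p * (p.2 : ℝ) / 3) ≤ muT ∧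
      t = ∑ p ∈ idxA, β p * (1 - (p.1 : ℝ)/3) / dof M N p.1 p.2} := by
    rcases le_or_gt muR (1/3) with hc1 | hc1
    · refine mem_pair M N muR muT t0 (0,3) (1,2) (by decide) (by decide) (by decide)
        (1-3*muR) (3*muR) (by linarith) (by linarith) (by linarith) (by linarith)
        (by ring) ?_ ?_ ?_
      · norm_num; linarith
      · norm_num; linarith
      · rw [ht0]
        norm_num [dof03 M N hNM, dof12 M N hM hNM]
        field_simp
        ring
    · rcases le_or_gt muR (2/3) with hc2 | hc2
      · refine mem_pair M N muR muT t0 (1,2) (2,1) (by decide) (by decide) (by decide)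
          (2-3*muR) (3*muR-1) (by linarith) (by linarith) (by linarith) (by linarith)
          (by ring) ?_ ?_ ?_
        · norm_num; linarith
        · norm_num; linarith
        · rw [ht0]
          norm_num [dof12 M N hM hNM, dof21 M N hNM]
          field_simp
          ring
      · refine mem_pair M N muR muT t0 (2,1) (3,0) (by decide) (by decide) (by decide)
          (3-3*muR) (3*muR-2) (by linarith) (by linarith) (by linarith) (by linarith)
          (by ring) ?_ ?_ ?_
        · norm_num; linarith
        · norm_num; linarith
        · rw [ht0]
          norm_num [dof21 M N hNM, dof30 M N]
          field_simp
  have hlb := lower_bound M N hM hN hNM muR muT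
  have hbdd : BddBelow {t : ℝ | ∃ β : ℕ × ℕ → ℝ,
      (∀ p ∈ idxA, 0 ≤ β p ∧ β p ≤ 1) ∧
      (∑ p ∈ idxA, β p) = 1 ∧
      (∑ p ∈ idxA, β p * (p.1 : ℝ) / 3) ≤ muR ∧
      (∑ p ∈ idxA, β p * (p.2 : ℝ) / 3) ≤ muT ∧
      t = ∑ p ∈ idxA, β p * (1 - (p.1 : ℝ)/3) / dof M N p.1 p.2} := ⟨t0, hlb⟩
  have hfirst : tauU M N muR muT = t0 :=
    le_antisymm (csInf_le hbdd hmem) (le_csInf ⟨t0, hmem⟩ hlb)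
  refine ⟨hfirst, hfirst.trans ?_⟩
  -- t0 = tauL
  have hB : (1/(3*(M:ℝ)))*(1-muR) ≤ t0 := by
    rw [ht0]
    apply mul_le_mul_of_nonneg_right _ (by linarith : (0:ℝ) ≤ 1 - muR)
    apply one_div_le_one_div_of_le hNr (by linarith)
  have hC : (2/(3*(M:ℝ)))*(1-2*muR) ≤ t0 := by
    have e1 : (2/(3*(M:ℝ)))*(1-2*muR) = 2*(1-2*muR)/(3*(M:ℝ)) := by ring
    have e2 : t0 = (1-muR)/(N:ℝ) := by rw [ht0]; ring
    rw [e1, e2, div_le_div_iff₀ (by linarith) hNr]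
    nlinarith [mul_nonneg (show (0:ℝ) ≤ 3*(M:ℝ)-2*N by linarith)
      (show (0:ℝ) ≤ 1-muR by linarith), mul_nonneg hNr.le h0]
  have hD : (3/(3*(M:ℝ)))*(1-3*muR) ≤ t0 := by
    have e1 : (3/(3*(M:ℝ)))*(1-3*muR) = 3*(1-3*muR)/(3*(M:ℝ)) := by ring
    have e2 : t0 = (1-muR)/(N:ℝ) := by rw [ht0]; ring
    rw [e1, e2, div_le_div_iff₀ (by linarith) hNr]
    nlinarith [mul_nonneg (show (0:ℝ) ≤ (M:ℝ)-N by linarith)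
      (show (0:ℝ) ≤ 1-muR by linarith), mul_nonneg hNr.le h0]
  unfold tauL
  rw [ht0]
  exact (max_eq_left (le_trans (max_le hB (max_le hC hD)) (le_refl _))).symm
end

section
/- If N ≤ 2M, then for every (μ_R, μ_T) in the feasible region F with μ_R + μ_T ≥ 1 and 2μ_R + μ_T ≥ 5/3, the LP value satisfies τ_u(μ_R, μ_T) = (1/N)(1 − μ_R) = τ_l(μ_R). -/
open Finset

lemma d01_bounds (M N : ℕ) (hM : 0 < M) (hN : 0 < N) :
    0 < dof M N 0 1 ∧ dof M N 0 1 ≤ N := by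
  have hMr : (1:ℝ) ≤ M := by exact_mod_cast hM
  have hNr : (1:ℝ) ≤ N := by exact_mod_cast hN
  simp only [dof]
  by_cases hMN : M = N
  · rw [if_pos hMN]
    have : min (M:ℝ) N ≤ N := min_le_right _ _
    have : (1:ℝ) ≤ min (M:ℝ) N := le_min hMr hNr
    constructor <;> linarith
  · rw [if_neg hMN]
    set km : ℝ := min (M:ℝ) N with hkm
    set kp : ℝ := max (M:ℝ) N with hkp
    have hkm1 : 1 ≤ km := le_min hMr hNr
    have hgap : 1 ≤ kp - km := by
      rcases Nat.lt_or_ge M N with h | h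
      · have h' : (M:ℝ) < N := by exact_mod_cast h
        rw [hkm, hkp, min_eq_left h'.le, max_eq_right h'.le]
        have : (M:ℝ) + 1 ≤ N := by exact_mod_cast h
        linarith
      · have hlt : N < M := lt_of_le_of_ne h (fun e => hMN e.symm)
        have h' : (N:ℝ) < M := by exact_mod_cast hlt
        rw [hkm, hkp, min_eq_right h'.le, max_eq_left h'.le]
        have : (N:ℝ) + 1 ≤ M := by exact_mod_cast hlt
        linarith
    have hxpos : 0 < km / (kp - km) := by positivity
    have hξ : (1:ℝ) ≤ ((⌈km / (kp - km)⌉ : ℤ) : ℝ) := by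
      exact_mod_cast Int.ceil_pos.mpr hxpos
    set ξ : ℝ := ((⌈km / (kp - km)⌉ : ℤ) : ℝ) with hξdef
    have hξpos : 0 < ξ := lt_of_lt_of_le one_pos hξ
    have hinv : 1/ξ ≤ 1 := by rw [div_le_one hξpos]; exact hξ
    have hinvpos : 0 < 1/ξ := by positivity
    have h2m : (1:ℝ) ≤ 2 - 1/ξ := by linarith
    have h2p : (0:ℝ) < 2 + 1/ξ := by linarith
    have hkp1 : (1:ℝ) ≤ kp := le_trans hMr (le_max_left _ _)
    constructor
    · apply lt_min <;> positivity
    · calc min (km / (2 - 1/ξ)) (kp / (2 + 1/ξ)) ≤ km / (2 - 1/ξ) := min_le_left _ _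
        _ ≤ km / 1 := by
            apply div_le_div_of_nonneg_left (by linarith) (by linarith) h2m
        _ = km := div_one km
        _ ≤ N := min_le_right _ _

lemma dof_bounds (M N : ℕ) (hM : 0 < M) (hN : 0 < N) (hNM : N ≤ 2*M) :
    ∀ p ∈ idxA, 0 < dof M N p.1 p.2 ∧ dof M N p.1 p.2 ≤ N := by
  have hMr : (1:ℝ) ≤ M := by exact_mod_cast hM
  have hNr : (1:ℝ) ≤ N := by exact_mod_cast hN
  have hMpos : (0:ℝ) < M := by linarith
  have hNM' : (N:ℝ) ≤ 2*M := by exact_mod_cast hNM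
  intro p hp
  fin_cases hp
  · exact d01_bounds M N hM hN
  · simp only [dof]
    split_ifs with h1 h2 h3
    · exact ⟨by linarith, le_refl _⟩
    · rw [not_le, lt_div_iff₀ hMpos] at h1
      exact ⟨by linarith, by linarith⟩
    · exact ⟨by linarith, by linarith⟩
    · rw [not_le, lt_div_iff₀ hMpos] at h3
      exact ⟨by linarith, by linarith⟩
  · exact ⟨lt_min (by linarith) (by linarith), min_le_right _ _⟩
  · simp only [dof]
    split_ifs with h1 h2 h3
    · exact ⟨by linarith, by linarith⟩
    · rw [not_le, lt_div_iff₀ hMpos] at h1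
      exact ⟨by linarith, by linarith⟩
    · exact ⟨by linarith, by linarith⟩
    · rw [not_le, lt_div_iff₀ hMpos] at h3
      exact ⟨by linarith, by linarith⟩
  · simp only [dof]
    split_ifs with h1 h2 h3
    · exact ⟨by linarith, le_refl _⟩
    · rw [not_le, lt_div_iff₀ hMpos] at h1
      exact ⟨by linarith, by linarith⟩
    · exact ⟨by linarith, by linarith⟩
    · rw [not_le, lt_div_iff₀ hMpos] at h3
      exact ⟨by linarith, by linarith⟩
  · exact ⟨lt_min (by linarith) (by linarith), min_le_left _ _⟩
  · exact ⟨lt_min (by linarith) (by linarith), min_le_left _ _⟩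
  · exact ⟨lt_min (by linarith) (by linarith), min_le_left _ _⟩
  · exact ⟨lt_min (by linarith) (by linarith), min_le_left _ _⟩
  · exact ⟨one_pos, hNr⟩
  · exact ⟨one_pos, hNr⟩
  · exact ⟨one_pos, hNr⟩
  · exact ⟨one_pos, hNr⟩


set_option maxHeartbeats 1600000 in
/-- If `N ≤ 2M`, then for every `(μ_R, μ_T)` in the feasible region with
`μ_R + μ_T ≥ 1` and `2μ_R + μ_T ≥ 5/3`, one has
`τ_u(μ_R, μ_T) = (1/N)(1 − μ_R) = τ_l(μ_R)`. -/
theorem tauU_eq_case_N_le_two_M (M N : ℕ) (hM : 0 < M) (hN : 0 < N)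
    (hNM : N ≤ 2 * M)
    (muR muT : ℝ) (h : FeasRegion muR muT)
    (hsum : 1 ≤ muR + muT) (hsum2 : 5/3 ≤ 2*muR + muT) :
    tauU M N muR muT = (1/(N:ℝ)) * (1 - muR) ∧
    tauU M N muR muT = tauL M N muR := by
  obtain ⟨hR0, hR1, hT0, hT1, hF⟩ := h
  have hMr : (1:ℝ) ≤ M := by exact_mod_cast hM
  have hNr : (1:ℝ) ≤ N := by exact_mod_cast hN
  have hNpos : (0:ℝ) < N := by linarith
  have hMpos : (0:ℝ) < M := by linarith
  have hNM' : (N:ℝ) ≤ 2*M := by exact_mod_cast hNM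
  have hR13 : 1/3 ≤ muR := by linarith
  -- the LP feasible-value set
  set S : Set ℝ := {t : ℝ | ∃ β : ℕ × ℕ → ℝ,
    (∀ p ∈ idxA, 0 ≤ β p ∧ β p ≤ 1) ∧
    (∑ p ∈ idxA, β p) = 1 ∧
    (∑ p ∈ idxA, β p * (p.1 : ℝ) / 3) ≤ muR ∧
    (∑ p ∈ idxA, β p * (p.2 : ℝ) / 3) ≤ muT ∧
    t = ∑ p ∈ idxA, β p * (1 - (p.1 : ℝ)/3) / dof M N p.1 p.2} with hSdef
  have hlb : ∀ t ∈ S, (1/(N:ℝ))*(1 - muR) ≤ t := by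
    rintro t ⟨β, hβ, hβ1, hβR, _hβT, rfl⟩
    have key : ∀ p ∈ idxA,
        β p * (1 - (p.1:ℝ)/3) / N ≤ β p * (1 - (p.1:ℝ)/3) / dof M N p.1 p.2 := by
      intro p hp
      obtain ⟨hd0, hdN⟩ := dof_bounds M N hM hN hNM p hp
      have hm3 : (p.1:ℝ) ≤ 3 := by
        have : p.1 < 4 := by
          simp only [idxA, Finset.mem_filter, Finset.mem_product, Finset.mem_range] at hp
          exact hp.1.1
        exact_mod_cast Nat.lt_succ_iff.mp this
      have hnum : 0 ≤ β p * (1 - (p.1:ℝ)/3) :=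
        mul_nonneg (hβ p hp).1 (by linarith)
      exact div_le_div_of_nonneg_left hnum hd0 hdN
    have e1 : ∑ p ∈ idxA, β p * (1 - (p.1:ℝ)/3) / N
        = ((∑ p ∈ idxA, β p) - ∑ p ∈ idxA, β p * (p.1:ℝ) / 3) / N := by
      rw [← Finset.sum_div, ← Finset.sum_sub_distrib]
      congr 1
      exact Finset.sum_congr rfl (fun p _ => by ring)
    calc (1/(N:ℝ))*(1 - muR)
        ≤ (1/(N:ℝ)) * (1 - ∑ p ∈ idxA, β p * (p.1:ℝ) / 3) := by
          apply mul_le_mul_of_nonneg_left (by linarith) (by positivity)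
      _ = ∑ p ∈ idxA, β p * (1 - (p.1:ℝ)/3) / N := by
          rw [e1, hβ1]; ring
      _ ≤ _ := Finset.sum_le_sum key
  have hd13 : dof M N 1 3 = N := by
    simp only [dof]; exact min_eq_left hNM'
  have hd21 : dof M N 2 1 = N := by
    simp only [dof]; exact min_eq_left (by linarith)
  have hmem : (1/(N:ℝ))*(1 - muR) ∈ S := by
    by_cases hc : (2:ℝ)/3 ≤ muR
    · refine ⟨fun p => if p = (2,1) then 3*(1-muR) else if p = (3,0) then 3*muR-2 else 0,
        ?_, ?_, ?_, ?_, ?_⟩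
      · intro p _; dsimp only; split_ifs <;> constructor <;> linarith
      · norm_num [idxA, Finset.sum_filter, Finset.sum_product, Finset.sum_range_succ,
          Prod.ext_iff]
        all_goals linarith
      · norm_num [idxA, Finset.sum_filter, Finset.sum_product, Finset.sum_range_succ,
          Prod.ext_iff]
        all_goals linarith
      · norm_num [idxA, Finset.sum_filter, Finset.sum_product, Finset.sum_range_succ,
          Prod.ext_iff]
        all_goals linarith
      · norm_num [idxA, Finset.sum_filter, Finset.sum_product, Finset.sum_range_succ,
          Prod.ext_iff, hd21]
        field_simp
        all_goals ring
    · push_neg at hc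
      refine ⟨fun p => if p = (1,3) then 2-3*muR else if p = (2,1) then 3*muR-1 else 0,
        ?_, ?_, ?_, ?_, ?_⟩
      · intro p _; dsimp only; split_ifs <;> constructor <;> linarith
      · norm_num [idxA, Finset.sum_filter, Finset.sum_product, Finset.sum_range_succ,
          Prod.ext_iff]
        all_goals linarith
      · norm_num [idxA, Finset.sum_filter, Finset.sum_product, Finset.sum_range_succ,
          Prod.ext_iff]
        all_goals linarith
      · norm_num [idxA, Finset.sum_filter, Finset.sum_product, Finset.sum_range_succ,
          Prod.ext_iff]
        all_goals linarith
      · norm_num [idxA, Finset.sum_filter, Finset.sum_product, Finset.sum_range_succ,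
          Prod.ext_iff, hd13, hd21]
        field_simp
        all_goals ring
  have hEq : tauU M N muR muT = (1/(N:ℝ))*(1 - muR) := by
    have : tauU M N muR muT = sInf S := rfl
    rw [this]
    exact le_antisymm (csInf_le ⟨_, hlb⟩ hmem) (le_csInf ⟨_, hmem⟩ hlb)
  refine ⟨hEq, hEq.trans ?_⟩
  have hA0 : 0 ≤ (1/(N:ℝ))*(1 - muR) := by
    apply mul_nonneg (by positivity) (by linarith)
  have hB : (1/(3*(M:ℝ))) * (1 - muR) ≤ (1/(N:ℝ)) * (1 - muR) := by
    apply mul_le_mul_of_nonneg_right _ (by linarith)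
    apply one_div_le_one_div_of_le hNpos (by linarith)
  have hC : (2/(3*(M:ℝ))) * (1 - 2*muR) ≤ (1/(N:ℝ)) * (1 - muR) := by
    rw [div_mul_eq_mul_div, div_mul_eq_mul_div, div_le_div_iff₀ (by linarith) hNpos]
    rcases le_or_gt muR (1/2) with hh | hh
    · nlinarith [mul_nonneg (by linarith : (0:ℝ) ≤ 1 - 2*muR) (by linarith : (0:ℝ) ≤ 2*M - N),
        mul_nonneg hMpos.le (by linarith : (0:ℝ) ≤ 5*muR - 1)]
    · nlinarith [mul_nonneg hNpos.le (by linarith : (0:ℝ) ≤ 2*muR - 1),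
        mul_nonneg (by linarith : (0:ℝ) ≤ 3*M) (by linarith : (0:ℝ) ≤ 1 - muR)]
  have hD : (3/(3*(M:ℝ))) * (1 - 3*muR) ≤ (1/(N:ℝ)) * (1 - muR) := by
    have : (3/(3*(M:ℝ))) * (1 - 3*muR) ≤ 0 :=
      mul_nonpos_of_nonneg_of_nonpos (by positivity) (by linarith)
    linarith
  unfold tauL
  exact (max_eq_left (max_le hB (max_le hC hD))).symm
end

section
/- For all positive integers M and N and every (μ_R, μ_T) in the feasible region F with μ_R ≥ 2/3 and μ_R + μ_T ≥ 1, the LP value satisfies τ_u(μ_R, μ_T) = (1 − μ_R)/min{N, 3M} = τ_l(μ_R). -/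
open Finset

lemma sum_idxA (f : ℕ × ℕ → ℝ) : ∑ p ∈ idxA, f p =
    f (3,0) + f (0,1) + f (1,1) + f (2,1) + f (3,1) + f (0,2) + f (1,2) + f (2,2)
      + f (3,2) + f (0,3) + f (1,3) + f (2,3) + f (3,3) := by
  rw [show idxA = {(3,0),(0,1),(1,1),(2,1),(3,1),(0,2),(1,2),(2,2),(3,2),(0,3),(1,3),(2,3),(3,3)} from by decide]
  rw [Finset.sum_insert (by decide), Finset.sum_insert (by decide), Finset.sum_insert (by decide),
      Finset.sum_insert (by decide), Finset.sum_insert (by decide), Finset.sum_insert (by decide),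
      Finset.sum_insert (by decide), Finset.sum_insert (by decide), Finset.sum_insert (by decide),
      Finset.sum_insert (by decide), Finset.sum_insert (by decide), Finset.sum_insert (by decide),
      Finset.sum_singleton]
  ring

lemma dof_pos_le (M N : ℕ) (hM : 0 < M) (hN : 0 < N) (m n : ℕ) (hp : (m, n) ∈ idxA) :
    0 < dof M N m n ∧ dof M N m n ≤ min (N:ℝ) (3*(M:ℝ)) := by
  have hM' : (0:ℝ) < M := by exact_mod_cast hM
  have hN' : (0:ℝ) < N := by exact_mod_cast hN
  have hM1 : (1:ℝ) ≤ M := by exact_mod_cast hM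
  have hN1 : (1:ℝ) ≤ N := by exact_mod_cast hN
  have hmem : m < 4 ∧ n < 4 ∧ 3 ≤ m + 3 * n := by
    simpa [idxA, Finset.mem_filter, Finset.mem_product, and_assoc] using hp
  obtain ⟨hm4, hn4, hmn⟩ := hmem
  have hkmin : min (M:ℝ) (N:ℝ) ≤ min (N:ℝ) (3*(M:ℝ)) :=
    le_min (min_le_right _ _) ((min_le_left _ _).trans (by linarith))
  interval_cases m <;> interval_cases n <;> try omega
  all_goals simp only [dof]
  -- (0,1)
  · have key : ∀ a b : ℝ, 0 < a → a < b →
        0 < min (a / (2 - 1/((⌈a/(b-a)⌉ : ℤ):ℝ))) (b / (2 + 1/((⌈a/(b-a)⌉ : ℤ):ℝ))) ∧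
        min (a / (2 - 1/((⌈a/(b-a)⌉ : ℤ):ℝ))) (b / (2 + 1/((⌈a/(b-a)⌉ : ℤ):ℝ))) ≤ a := by
      intro a b ha hab
      have hx : (0:ℝ) < a / (b - a) := div_pos ha (by linarith)
      have hceil : (1:ℤ) ≤ ⌈a / (b - a)⌉ := Int.ceil_pos.mpr hx
      have hξ1 : (1:ℝ) ≤ ((⌈a/(b-a)⌉ : ℤ):ℝ) := by
        exact_mod_cast hceil
      have hξ0 : (0:ℝ) < ((⌈a/(b-a)⌉ : ℤ):ℝ) := by linarith
      have hinv0 : 0 < 1/((⌈a/(b-a)⌉ : ℤ):ℝ) := by positivity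
      have hinv1 : 1/((⌈a/(b-a)⌉ : ℤ):ℝ) ≤ 1 := by
        rw [div_le_one hξ0]; linarith
      constructor
      · exact lt_min (div_pos ha (by linarith)) (div_pos (by linarith) (by linarith))
      · exact le_trans (min_le_left _ _) (div_le_self (le_of_lt ha) (by linarith))
    by_cases hMN : M = N
    · subst hMN
      rw [if_pos rfl, min_self]
      exact ⟨by positivity, le_min (by linarith) (by linarith)⟩
    · rw [if_neg hMN]
      have hne : (M:ℝ) ≠ (N:ℝ) := by exact_mod_cast hMN
      have hlt : min (M:ℝ) (N:ℝ) < max (M:ℝ) (N:ℝ) := min_lt_max.mpr hne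
      have hkm : (0:ℝ) < min (M:ℝ) (N:ℝ) := lt_min hM' hN'
      obtain ⟨hpos, hle⟩ := key (min (M:ℝ) (N:ℝ)) (max (M:ℝ) (N:ℝ)) hkm hlt
      exact ⟨hpos, hle.trans hkmin⟩
  -- (0,2)
  · split_ifs with h1 h2 h3
    · rw [div_le_iff₀ hM'] at h1
      exact ⟨hN', le_min le_rfl (by linarith)⟩
    · push_neg at h1
      rw [lt_div_iff₀ hM'] at h1
      exact ⟨by positivity, le_min (by linarith) (by linarith)⟩
    · push_neg at h2
      rw [lt_div_iff₀ hM'] at h2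
      rw [div_le_iff₀ hM'] at h3
      exact ⟨by positivity, le_min (by linarith) (by linarith)⟩
    · push_neg at h3
      rw [lt_div_iff₀ hM'] at h3
      exact ⟨hM', le_min (by linarith) (by linarith)⟩
  -- (0,3)
  · exact ⟨lt_min hM' hN', hkmin⟩
  -- (1,1)
  · split_ifs with h1 h2 h3
    · rw [div_le_iff₀ hM'] at h1
      exact ⟨by positivity, le_min (by linarith) (by linarith)⟩
    · push_neg at h1
      rw [lt_div_iff₀ hM'] at h1
      exact ⟨by positivity, le_min (by linarith) (by linarith)⟩
    · push_neg at h2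
      rw [lt_div_iff₀ hM'] at h2
      rw [div_le_iff₀ hM'] at h3
      exact ⟨by positivity, le_min (by linarith) (by linarith)⟩
    · push_neg at h3
      rw [lt_div_iff₀ hM'] at h3
      exact ⟨by positivity, le_min (by linarith) (by linarith)⟩
  -- (1,2)
  · split_ifs with h1 h2 h3
    · rw [div_le_iff₀ hM'] at h1
      exact ⟨hN', le_min le_rfl (by linarith)⟩
    · push_neg at h1
      rw [lt_div_iff₀ hM'] at h1
      exact ⟨hM', le_min (by linarith) (by linarith)⟩
    · push_neg at h2
      rw [lt_div_iff₀ hM'] at h2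
      rw [div_le_iff₀ hM'] at h3
      exact ⟨by positivity, le_min (by linarith) (by linarith)⟩
    · push_neg at h3
      rw [lt_div_iff₀ hM'] at h3
      exact ⟨by positivity, le_min (by linarith) (by linarith)⟩
  -- (1,3)
  · exact ⟨lt_min hN' (by positivity),
      le_min (min_le_left _ _) ((min_le_right _ _).trans (by linarith))⟩
  -- (2,1)
  · exact ⟨lt_min hN' (by positivity), le_rfl⟩
  -- (2,2)
  · exact ⟨lt_min hN' (by positivity), le_rfl⟩
  -- (2,3)
  · exact ⟨lt_min hN' (by positivity), le_rfl⟩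
  -- (3,0)
  · exact ⟨one_pos, le_min hN1 (by linarith)⟩
  -- (3,1)
  · exact ⟨one_pos, le_min hN1 (by linarith)⟩
  -- (3,2)
  · exact ⟨one_pos, le_min hN1 (by linarith)⟩
  -- (3,3)
  · exact ⟨one_pos, le_min hN1 (by linarith)⟩

/-- For all positive integers `M`, `N` and every `(μ_R, μ_T)` in the
feasible region with `μ_R ≥ 2/3` and `μ_R + μ_T ≥ 1`, one has
`τ_u(μ_R, μ_T) = (1 − μ_R)/min{N, 3M} = τ_l(μ_R)`. -/
theorem tauU_eq_case_large_muR (M N : ℕ) (hM : 0 < M) (hN : 0 < N)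
    (muR muT : ℝ) (h : FeasRegion muR muT)
    (hmuR : 2/3 ≤ muR) (hsum : 1 ≤ muR + muT) :
    tauU M N muR muT = (1 - muR) / min (N : ℝ) (3*(M:ℝ)) ∧
    tauU M N muR muT = tauL M N muR := by
  obtain ⟨hR0, hR1, hT0, hT1, hRT⟩ := h
  have hM' : (0:ℝ) < M := by exact_mod_cast hM
  have hN' : (0:ℝ) < N := by exact_mod_cast hN
  set k : ℝ := min (N:ℝ) (3*(M:ℝ)) with hkdef
  have hk : 0 < k := lt_min hN' (by positivity)
  set t₀ : ℝ := (1 - muR) / k with ht₀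
  set S := {t : ℝ | ∃ β : ℕ × ℕ → ℝ,
    (∀ p ∈ idxA, 0 ≤ β p ∧ β p ≤ 1) ∧
    (∑ p ∈ idxA, β p) = 1 ∧
    (∑ p ∈ idxA, β p * (p.1 : ℝ) / 3) ≤ muR ∧
    (∑ p ∈ idxA, β p * (p.2 : ℝ) / 3) ≤ muT ∧
    t = ∑ p ∈ idxA, β p * (1 - (p.1 : ℝ)/3) / dof M N p.1 p.2} with hS
  -- lower bound: every element of S is ≥ t₀
  have hlb : ∀ t ∈ S, t₀ ≤ t := by
    rintro t ⟨β, hβ01, hβsum, hβR, hβT, rfl⟩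
    have hterm : ∀ p ∈ idxA,
        β p * (1 - (p.1 : ℝ)/3) / k ≤ β p * (1 - (p.1 : ℝ)/3) / dof M N p.1 p.2 := by
      intro p hp
      obtain ⟨hd0, hdk⟩ := dof_pos_le M N hM hN p.1 p.2 (by simpa using hp)
      have hm3 : (p.1 : ℝ) ≤ 3 := by
        have : p.1 < 4 := by
          simp only [idxA, Finset.mem_filter, Finset.mem_product, Finset.mem_range] at hp
          exact hp.1.1
        exact_mod_cast Nat.lt_succ_iff.mp this
      have hc : 0 ≤ β p * (1 - (p.1 : ℝ)/3) := by
        have := (hβ01 p hp).1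
        have : (0:ℝ) ≤ 1 - (p.1 : ℝ)/3 := by linarith
        exact mul_nonneg (hβ01 p hp).1 this
      exact div_le_div_of_nonneg_left hc hd0 hdk
    have hsum1 : ∑ p ∈ idxA, β p * (1 - (p.1 : ℝ)/3) / k
        ≤ ∑ p ∈ idxA, β p * (1 - (p.1 : ℝ)/3) / dof M N p.1 p.2 :=
      Finset.sum_le_sum hterm
    have hsum2 : ∑ p ∈ idxA, β p * (1 - (p.1 : ℝ)/3) / k
        = (∑ p ∈ idxA, β p * (1 - (p.1 : ℝ)/3)) / k := by
      rw [Finset.sum_div]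
    have hsum3 : ∑ p ∈ idxA, β p * (1 - (p.1 : ℝ)/3)
        = (∑ p ∈ idxA, β p) - ∑ p ∈ idxA, β p * (p.1 : ℝ) / 3 := by
      rw [← Finset.sum_sub_distrib]
      exact Finset.sum_congr rfl (fun p _ => by ring)
    have h1mu : 1 - muR ≤ ∑ p ∈ idxA, β p * (1 - (p.1 : ℝ)/3) := by
      rw [hsum3, hβsum]; linarith
    calc t₀ = (1 - muR) / k := rfl
      _ ≤ (∑ p ∈ idxA, β p * (1 - (p.1 : ℝ)/3)) / k := by gcongr
      _ = ∑ p ∈ idxA, β p * (1 - (p.1 : ℝ)/3) / k := hsum2.symm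
      _ ≤ _ := hsum1
  -- membership: t₀ ∈ S
  have hd21 : dof M N 2 1 = k := by simp [dof, hkdef]
  have hmem : t₀ ∈ S := by
    refine ⟨fun p => if p = (2,1) then 3*(1-muR) else if p = (3,0) then 3*muR - 2 else 0,
      ?_, ?_, ?_, ?_, ?_⟩
    · intro p _
      dsimp only
      split_ifs <;> constructor <;> linarith
    · rw [sum_idxA]
      norm_num [Prod.ext_iff]
      ring
    · rw [sum_idxA]
      norm_num [Prod.ext_iff]
      linarith
    · rw [sum_idxA]
      norm_num [Prod.ext_iff]
      linarith
    · rw [sum_idxA]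
      norm_num [Prod.ext_iff, hd21]
      rw [ht₀]
      ring
  have hbdd : BddBelow S := ⟨t₀, hlb⟩
  have hne : S.Nonempty := ⟨t₀, hmem⟩
  have htau : tauU M N muR muT = t₀ := by
    rw [tauU, ← hS]
    exact le_antisymm (csInf_le hbdd hmem) (le_csInf hne hlb)
  refine ⟨htau, htau.trans ?_⟩
  -- t₀ = tauL
  have h1mu0 : 0 ≤ 1 - muR := by linarith
  rw [tauL, ht₀]
  rcases le_total (N:ℝ) (3*(M:ℝ)) with hc | hc
  · rw [hkdef, min_eq_left hc]
    have hb : (1/(3*(M:ℝ))) * (1 - muR) ≤ (1/(N:ℝ)) * (1 - muR) :=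
      mul_le_mul_of_nonneg_right (by
        apply one_div_le_one_div_of_le hN' hc) h1mu0
    have hcc : (2/(3*(M:ℝ))) * (1 - 2*muR) ≤ (1/(N:ℝ)) * (1 - muR) := by
      have : (2/(3*(M:ℝ))) * (1 - 2*muR) ≤ 0 :=
        mul_nonpos_of_nonneg_of_nonpos (by positivity) (by linarith)
      have h0 : 0 ≤ (1/(N:ℝ)) * (1 - muR) := by positivity
      linarith
    have hdd : (3/(3*(M:ℝ))) * (1 - 3*muR) ≤ (1/(N:ℝ)) * (1 - muR) := by
      have : (3/(3*(M:ℝ))) * (1 - 3*muR) ≤ 0 :=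
        mul_nonpos_of_nonneg_of_nonpos (by positivity) (by linarith)
      have h0 : 0 ≤ (1/(N:ℝ)) * (1 - muR) := by positivity
      linarith
    rw [max_eq_left (max_le hb (max_le hcc hdd))]
    rw [div_eq_mul_inv, one_div, mul_comm]
  · rw [hkdef, min_eq_right hc]
    have ha : (1/(N:ℝ)) * (1 - muR) ≤ (1/(3*(M:ℝ))) * (1 - muR) :=
      mul_le_mul_of_nonneg_right (by
        apply one_div_le_one_div_of_le (by positivity) hc) h1mu0
    have hcc : (2/(3*(M:ℝ))) * (1 - 2*muR) ≤ (1/(3*(M:ℝ))) * (1 - muR) := by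
      have : (2/(3*(M:ℝ))) * (1 - 2*muR) ≤ 0 :=
        mul_nonpos_of_nonneg_of_nonpos (by positivity) (by linarith)
      have h0 : 0 ≤ (1/(3*(M:ℝ))) * (1 - muR) := by positivity
      linarith
    have hdd : (3/(3*(M:ℝ))) * (1 - 3*muR) ≤ (1/(3*(M:ℝ))) * (1 - muR) := by
      have : (3/(3*(M:ℝ))) * (1 - 3*muR) ≤ 0 :=
        mul_nonpos_of_nonneg_of_nonpos (by positivity) (by linarith)
      have h0 : 0 ≤ (1/(3*(M:ℝ))) * (1 - muR) := by positivity
      linarith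
    rw [max_comm, max_eq_left, max_eq_left (max_le hcc hdd)]
    · rw [div_eq_mul_inv, one_div, mul_comm]
    · exact le_trans ha (le_max_left _ _)
end

section
/- Let M = 3 and N = 5, and consider the LP value τ_u at the cache-size point (μ_R, μ_T) = (0, 2/3). Then the memory-sharing choice β_{01} = β_{03} = 1/2 (all other β_{mn} = 0) is feasible for the LP, gives objective value (1/2)·(1/d_{01}) + (1/2)·(1/d_{03}) = (1/2)(1/2) + (1/2)(1/3) = 5/12, and hence τ_u(0, 2/3) ≤ 5/12 < 1/2 = 1/d_{02}, where 1/d_{02} is the value obtained by the equal file splitting strategy at the integer point (0, 2/3). In particular, equal file splitting at integer points is not always optimal. -/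
open Finset

/-- The memory-sharing choice `β_{01} = β_{03} = 1/2`, all other `β_{mn} = 0`. -/
noncomputable def betaShare : ℕ × ℕ → ℝ :=
  fun p => if p = (0,1) ∨ p = (0,3) then 1/2 else 0

lemma d01 : dof 3 5 0 1 = 2 := by
  norm_num [dof, show ⌈(3:ℝ)/2⌉ = 2 from by norm_num [Int.ceil_eq_iff]]

lemma d03 : dof 3 5 0 3 = 3 := by norm_num [dof]

lemma d02 : dof 3 5 0 2 = 2 := by norm_num [dof]

lemma dof_nonneg_s10 (p : ℕ × ℕ) (hp : p ∈ idxA) : 0 ≤ dof 3 5 p.1 p.2 := by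
  fin_cases hp <;>
    norm_num [dof, show ⌈(3:ℝ)/2⌉ = 2 from by norm_num [Int.ceil_eq_iff]]

/-- For `M = 3`, `N = 5` at the cache-size point `(μ_R, μ_T) = (0, 2/3)`,
the memory-sharing choice `β_{01} = β_{03} = 1/2` is feasible for the LP, gives
objective value `(1/2)(1/d_{01}) + (1/2)(1/d_{03}) = 5/12`, hence
`τ_u(0, 2/3) ≤ 5/12 < 1/2 = 1/d_{02}`, the value of equal file splitting at `(0, 2/3)`.
In particular, equal file splitting at integer points is not always optimal. -/
theorem equal_splitting_not_optimal :
    ((∀ p ∈ idxA, 0 ≤ betaShare p ∧ betaShare p ≤ 1) ∧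
     (∑ p ∈ idxA, betaShare p) = 1 ∧
     (∑ p ∈ idxA, betaShare p * (p.1 : ℝ) / 3) ≤ 0 ∧
     (∑ p ∈ idxA, betaShare p * (p.2 : ℝ) / 3) ≤ 2/3 ∧
     (∑ p ∈ idxA, betaShare p * (1 - (p.1 : ℝ)/3) / dof 3 5 p.1 p.2)
       = (1/2) * (1/dof 3 5 0 1) + (1/2) * (1/dof 3 5 0 3)) ∧
    (1/2) * (1/dof 3 5 0 1) + (1/2) * (1/dof 3 5 0 3) = (5/12 : ℝ) ∧
    tauU 3 5 0 (2/3) ≤ 5/12 ∧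
    (5/12 : ℝ) < 1/2 ∧
    1/dof 3 5 0 2 = (1/2 : ℝ) := by
  have hsum1 : (∑ p ∈ idxA, betaShare p) = 1 := by
    rw [idxA, Finset.sum_filter]
    norm_num [Finset.sum_product, Finset.sum_range_succ, betaShare, Prod.ext_iff]
  have hsumR : (∑ p ∈ idxA, betaShare p * (p.1 : ℝ) / 3) ≤ 0 := by
    rw [idxA, Finset.sum_filter]
    norm_num [Finset.sum_product, Finset.sum_range_succ, betaShare, Prod.ext_iff]
  have hsumT : (∑ p ∈ idxA, betaShare p * (p.2 : ℝ) / 3) ≤ 2/3 := by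
    rw [idxA, Finset.sum_filter]
    norm_num [Finset.sum_product, Finset.sum_range_succ, betaShare, Prod.ext_iff]
  have hobj : (∑ p ∈ idxA, betaShare p * (1 - (p.1 : ℝ)/3) / dof 3 5 p.1 p.2)
      = (1/2) * (1/dof 3 5 0 1) + (1/2) * (1/dof 3 5 0 3) := by
    rw [idxA, Finset.sum_filter]
    norm_num [Finset.sum_product, Finset.sum_range_succ, betaShare, Prod.ext_iff]
    ring
  have hbnd : (∀ p ∈ idxA, 0 ≤ betaShare p ∧ betaShare p ≤ 1) := by
    intro p _
    constructor <;> unfold betaShare <;> split <;> norm_num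
  have hval : (1/2) * (1/dof 3 5 0 1) + (1/2) * (1/dof 3 5 0 3) = (5/12 : ℝ) := by
    rw [d01, d03]; norm_num
  refine ⟨⟨hbnd, hsum1, hsumR, hsumT, hobj⟩, hval, ?_, by norm_num, by rw [d02]⟩
  have hmem : (5/12 : ℝ) ∈ {t : ℝ | ∃ β : ℕ × ℕ → ℝ,
      (∀ p ∈ idxA, 0 ≤ β p ∧ β p ≤ 1) ∧
      (∑ p ∈ idxA, β p) = 1 ∧
      (∑ p ∈ idxA, β p * (p.1 : ℝ) / 3) ≤ 0 ∧
      (∑ p ∈ idxA, β p * (p.2 : ℝ) / 3) ≤ 2/3 ∧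
      t = ∑ p ∈ idxA, β p * (1 - (p.1 : ℝ)/3) / dof 3 5 p.1 p.2} := by
    exact ⟨betaShare, hbnd, hsum1, hsumR, hsumT, by rw [hobj, hval]⟩
  have hbdd : BddBelow {t : ℝ | ∃ β : ℕ × ℕ → ℝ,
      (∀ p ∈ idxA, 0 ≤ β p ∧ β p ≤ 1) ∧
      (∑ p ∈ idxA, β p) = 1 ∧
      (∑ p ∈ idxA, β p * (p.1 : ℝ) / 3) ≤ 0 ∧
      (∑ p ∈ idxA, β p * (p.2 : ℝ) / 3) ≤ 2/3 ∧
      t = ∑ p ∈ idxA, β p * (1 - (p.1 : ℝ)/3) / dof 3 5 p.1 p.2} := by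
    refine ⟨0, ?_⟩
    rintro t ⟨β, hβ, -, -, -, rfl⟩
    refine Finset.sum_nonneg fun p hp => ?_
    have h1 : 0 ≤ β p := (hβ p hp).1
    have h2 : 0 ≤ 1 - (p.1 : ℝ)/3 := by
      have : p.1 < 4 := by
        have := (Finset.mem_filter.mp hp).1
        exact (Finset.mem_range.mp (Finset.mem_product.mp this).1)
      have : (p.1 : ℝ) ≤ 3 := by exact_mod_cast Nat.lt_succ_iff.mp this
      linarith
    exact div_nonneg (mul_nonneg h1 h2) (dof_nonneg_s10 p hp)
  exact csInf_le hbdd hmem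
end

section
/- Let M, N, N_T, N_R be positive integers with N_T ≥ 2 and N_R ≥ 2, and let d_{01} and d_{0N_T} be as defined (note d_{01} ≤ d_{0N_T}). For every (μ_R, μ_T) ∈ R1 ∪ R2, the optimal value of the linear program: minimize β_{01}/d_{01} + β_{0N_T}/d_{0N_T} over nonnegative reals β_{01}, β_{0N_T}, β_{N_R 0}, β_{N_R N_T} subject to β_{01} + β_{0N_T} + β_{N_R 0} + β_{N_R N_T} = 1, β_{N_R 0} + β_{N_R N_T} ≤ μ_R, and β_{01}/N_T + β_{0N_T} + β_{N_R N_T} ≤ μ_T, equals τ_gen(μ_R, μ_T). -/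
open Finset

/-- The DoF per user `d_{01}` of the `N_T × N_R` MIMO X channel:
`d_{01} = min{M N_T/N_R, q M N_T/(N_T + q N_R − q)}` with `q = ⌊N/M⌋` if `N ≥ M`, and
`d_{01} = min{N, q N N_T/(q N_T + N_R − q)}` with `q = ⌊M/N⌋` if `N < M`. -/
noncomputable def d01gen (M N NT NR : ℕ) : ℝ :=
  if M ≤ N then
    min ((M : ℝ)*NT/NR) (((N/M : ℕ) : ℝ)*M*NT/((NT : ℝ) + ((N/M : ℕ) : ℝ)*NR - ((N/M : ℕ) : ℝ)))
  else
    min (N : ℝ) (((M/N : ℕ) : ℝ)*N*NT/(((M/N : ℕ) : ℝ)*NT + (NR : ℝ) - ((M/N : ℕ) : ℝ)))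

/-- The DoF per user `d_{0N_T} = min{M N_T/N_R, N}` of the MIMO broadcast channel. -/
noncomputable def d0NTgen (M N NT NR : ℕ) : ℝ :=
  min ((M : ℝ)*NT/NR) (N : ℝ)

/-- Region `R1 = {(μ_R,μ_T) : μ_R + μ_T ≥ 1, 0 ≤ μ_R ≤ 1, 0 ≤ μ_T ≤ 1}`. -/
def regR1 (muR muT : ℝ) : Prop :=
  1 ≤ muR + muT ∧ 0 ≤ muR ∧ muR ≤ 1 ∧ 0 ≤ muT ∧ muT ≤ 1

/-- Region `R2 = {(μ_R,μ_T) : μ_R + μ_T < 1, μ_R ≥ 0, μ_T ≤ 1, μ_R + N_T μ_T ≥ 1}`. -/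
def regR2 (NT : ℕ) (muR muT : ℝ) : Prop :=
  muR + muT < 1 ∧ 0 ≤ muR ∧ muT ≤ 1 ∧ 1 ≤ muR + (NT : ℝ)*muT

/-- The achievable NDT expression `τ_gen` for the `N_T × N_R` network. -/
noncomputable def tauGen (M N NT NR : ℕ) (muR muT : ℝ) : ℝ :=
  if 1 ≤ muR + muT then
    (1/d0NTgen M N NT NR) * (1 - muR)
  else
    (1/d0NTgen M N NT NR
      - ((NT : ℝ)/((NT : ℝ) - 1)) * (1/d0NTgen M N NT NR - 1/d01gen M N NT NR)) * (1 - muR)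
    - ((NT : ℝ)/((NT : ℝ) - 1)) * (1/d01gen M N NT NR - 1/d0NTgen M N NT NR) * muT

/-- The NDT lower bound for the `N_T × N_R` network:
`max{ (1/N)(1 − μ_R), max_{s∈{1,…,N_R}} (s/(N_T M))(1 − s μ_R) }`. -/
noncomputable def tauLGen (M N NT NR : ℕ) (hNR : 0 < NR) (muR : ℝ) : ℝ :=
  max ((1/(N : ℝ)) * (1 - muR))
    ((Finset.Icc 1 NR).sup' (Finset.nonempty_Icc.mpr hNR)
      (fun s => ((s : ℝ)/((NT : ℝ)*(M : ℝ))) * (1 - (s : ℝ)*muR)))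

lemma dfacts (M N NT NR : ℕ) (hM : 0 < M) (hN : 0 < N) (hNT : 2 ≤ NT) (hNR : 2 ≤ NR) :
    0 < d01gen M N NT NR ∧ 0 < d0NTgen M N NT NR ∧
      d01gen M N NT NR ≤ d0NTgen M N NT NR := by
  have hM' : (0:ℝ) < M := by exact_mod_cast hM
  have hN' : (0:ℝ) < N := by exact_mod_cast hN
  have hNT' : (2:ℝ) ≤ NT := by exact_mod_cast hNT
  have hNR' : (2:ℝ) ≤ NR := by exact_mod_cast hNR
  have hNT0 : (0:ℝ) < NT := by linarith
  have hNR0 : (0:ℝ) < NR := by linarith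
  have ha : (0:ℝ) < (M:ℝ)*NT/NR := by positivity
  have hdT : 0 < d0NTgen M N NT NR := lt_min ha hN'
  unfold d01gen d0NTgen
  by_cases hMN : M ≤ N
  · rw [if_pos hMN]
    have hq : (1:ℝ) ≤ ((N/M : ℕ) : ℝ) := by
      exact_mod_cast (Nat.one_le_div_iff hM).mpr hMN
    have hqM : ((N/M : ℕ) : ℝ) * M ≤ N := by
      exact_mod_cast Nat.div_mul_le_self N M
    have hden : (0:ℝ) < (NT : ℝ) + ((N/M : ℕ) : ℝ)*NR - ((N/M : ℕ) : ℝ) := by nlinarith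
    have hnum : (0:ℝ) < ((N/M : ℕ) : ℝ)*M*NT :=
      mul_pos (mul_pos (by linarith) hM') hNT0
    have hsec : ((N/M : ℕ) : ℝ)*M*NT/((NT : ℝ) + ((N/M : ℕ) : ℝ)*NR - ((N/M : ℕ) : ℝ)) ≤ N := by
      rw [div_le_iff₀ hden]
      nlinarith [mul_le_mul_of_nonneg_right hqM hNT0.le,
        mul_nonneg (mul_nonneg hN'.le (by linarith : (0:ℝ) ≤ ((N/M:ℕ):ℝ)))
          (by linarith : (0:ℝ) ≤ (NR:ℝ)-1)]
    refine ⟨lt_min ha (div_pos hnum hden), hdT, le_min (min_le_left _ _)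
      ((min_le_right _ _).trans hsec)⟩
  · rw [if_neg hMN]
    push_neg at hMN
    have hq : (1:ℝ) ≤ ((M/N : ℕ) : ℝ) := by
      exact_mod_cast (Nat.one_le_div_iff hN).mpr hMN.le
    have hqN : ((M/N : ℕ) : ℝ) * N ≤ M := by
      exact_mod_cast Nat.div_mul_le_self M N
    have hden : (0:ℝ) < ((M/N : ℕ) : ℝ)*NT + (NR : ℝ) - ((M/N : ℕ) : ℝ) := by nlinarith
    have hnum : (0:ℝ) < ((M/N : ℕ) : ℝ)*N*NT :=
      mul_pos (mul_pos (by linarith) hN') hNT0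
    have hsec : ((M/N : ℕ) : ℝ)*N*NT/(((M/N : ℕ) : ℝ)*NT + (NR : ℝ) - ((M/N : ℕ) : ℝ))
        ≤ (M : ℝ)*NT/NR := by
      rw [div_le_div_iff₀ hden hNR0]
      nlinarith [mul_le_mul_of_nonneg_right hqN (mul_pos hNT0 hNR0).le,
        mul_nonneg (mul_nonneg hM'.le hNT0.le) (mul_nonneg (by linarith : (0:ℝ) ≤ ((M/N:ℕ):ℝ)) (by linarith : (0:ℝ) ≤ (NT:ℝ)-1))]
    exact ⟨lt_min hN' (div_pos hnum hden), hdT,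
      le_min ((min_le_right _ _).trans hsec) (min_le_left _ _)⟩

set_option maxHeartbeats 1000000 in
/-- For every `(μ_R, μ_T) ∈ R1 ∪ R2`, the optimal value of the
four-variable memory-sharing LP equals `τ_gen(μ_R, μ_T)`. -/
theorem gen_lp_value (M N NT NR : ℕ) (hM : 0 < M) (hN : 0 < N)
    (hNT : 2 ≤ NT) (hNR : 2 ≤ NR)
    (muR muT : ℝ) (h : regR1 muR muT ∨ regR2 NT muR muT) :
    sInf {t : ℝ | ∃ b01 b0T bR0 bRT : ℝ,
      0 ≤ b01 ∧ 0 ≤ b0T ∧ 0 ≤ bR0 ∧ 0 ≤ bRT ∧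
      b01 + b0T + bR0 + bRT = 1 ∧
      bR0 + bRT ≤ muR ∧
      b01/(NT : ℝ) + b0T + bRT ≤ muT ∧
      t = b01/d01gen M N NT NR + b0T/d0NTgen M N NT NR}
    = tauGen M N NT NR muR muT := by
  obtain ⟨hd1, hdT, hle⟩ := dfacts M N NT NR hM hN hNT hNR
  have hNT' : (2:ℝ) ≤ NT := by exact_mod_cast hNT
  have hNT0 : (0:ℝ) < NT := by linarith
  have hNT1 : (0:ℝ) < (NT:ℝ) - 1 := by linarith
  have hinv : 1/d0NTgen M N NT NR ≤ 1/d01gen M N NT NR :=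
    one_div_le_one_div_of_le hd1 hle
  have hA : (0:ℝ) < 1/d0NTgen M N NT NR := by positivity
  set D1 := d01gen M N NT NR with hD1
  set DT := d0NTgen M N NT NR with hDT
  unfold tauGen
  rw [← hD1, ← hDT]
  by_cases hcase : 1 ≤ muR + muT
  · rw [if_pos hcase]
    obtain ⟨h1, hmuR0, hmuR1, hmuT0, hmuT1⟩ := h.resolve_right (by
      rintro ⟨hlt, -⟩; linarith)
    have mem : (1/DT) * (1 - muR) ∈ {t : ℝ | ∃ b01 b0T bR0 bRT : ℝ,
        0 ≤ b01 ∧ 0 ≤ b0T ∧ 0 ≤ bR0 ∧ 0 ≤ bRT ∧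
        b01 + b0T + bR0 + bRT = 1 ∧ bR0 + bRT ≤ muR ∧
        b01/(NT : ℝ) + b0T + bRT ≤ muT ∧ t = b01/D1 + b0T/DT} := by
      refine ⟨0, 1 - muR, muR, 0, le_refl 0, by linarith, hmuR0, le_refl 0,
        by ring, by linarith, by rw [zero_div]; linarith, by rw [zero_div]; ring⟩
    have lb : ∀ t ∈ {t : ℝ | ∃ b01 b0T bR0 bRT : ℝ,
        0 ≤ b01 ∧ 0 ≤ b0T ∧ 0 ≤ bR0 ∧ 0 ≤ bRT ∧
        b01 + b0T + bR0 + bRT = 1 ∧ bR0 + bRT ≤ muR ∧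
        b01/(NT : ℝ) + b0T + bRT ≤ muT ∧ t = b01/D1 + b0T/DT},
        (1/DT) * (1 - muR) ≤ t := by
      rintro t ⟨b01, b0T, bR0, bRT, h01, h0T, hR0, hRT, hsum, hmR, hmT, rfl⟩
      have k1 : b01 * (1/DT) ≤ b01 * (1/D1) := mul_le_mul_of_nonneg_left hinv h01
      have k2 : (1 - muR) * (1/DT) ≤ (b01 + b0T) * (1/DT) :=
        mul_le_mul_of_nonneg_right (by linarith) hA.le
      rw [div_eq_mul_one_div b01 D1, div_eq_mul_one_div b0T DT]
      linarith [k1, k2]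
    exact le_antisymm (csInf_le ⟨_, lb⟩ mem) (le_csInf ⟨_, mem⟩ lb)
  · rw [if_neg hcase]
    push_neg at hcase
    obtain ⟨hlt, hmuR0, hmuT1, hNTmu⟩ := h.resolve_left (by
      rintro ⟨h1, -⟩; linarith)
    have hmuT0 : 0 < muT := by nlinarith
    have hmuR1 : muR < 1 := by linarith
    set c := (NT:ℝ)/((NT:ℝ) - 1) with hcdef
    have hc0 : 0 < c := by rw [hcdef]; positivity
    have hb0T : c * (1 - muR - muT) ≤ 1 - muR := by
      rw [hcdef, div_mul_eq_mul_div, div_le_iff₀ hNT1]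
      nlinarith
    have hb01 : 0 ≤ c * (1 - muR - muT) := mul_nonneg hc0.le (by linarith)
    have mem : (1/DT - c * (1/DT - 1/D1)) * (1 - muR) - c * (1/D1 - 1/DT) * muT ∈
        {t : ℝ | ∃ b01 b0T bR0 bRT : ℝ,
        0 ≤ b01 ∧ 0 ≤ b0T ∧ 0 ≤ bR0 ∧ 0 ≤ bRT ∧
        b01 + b0T + bR0 + bRT = 1 ∧ bR0 + bRT ≤ muR ∧
        b01/(NT : ℝ) + b0T + bRT ≤ muT ∧ t = b01/D1 + b0T/DT} := by
      refine ⟨c * (1 - muR - muT), 1 - muR - c * (1 - muR - muT), muR, 0,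
        hb01, by linarith, hmuR0, le_refl 0, by ring, by linarith, ?_, ?_⟩
      · have : c * (1 - muR - muT)/(NT:ℝ) + (1 - muR - c * (1 - muR - muT)) + 0 = muT := by
          rw [hcdef]; field_simp; ring
        linarith [this]
      · have hD1ne : D1 ≠ 0 := ne_of_gt hd1
        have hDTne : DT ≠ 0 := ne_of_gt hdT
        rw [hcdef]; field_simp; ring
    have lb : ∀ t ∈ {t : ℝ | ∃ b01 b0T bR0 bRT : ℝ,
        0 ≤ b01 ∧ 0 ≤ b0T ∧ 0 ≤ bR0 ∧ 0 ≤ bRT ∧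
        b01 + b0T + bR0 + bRT = 1 ∧ bR0 + bRT ≤ muR ∧
        b01/(NT : ℝ) + b0T + bRT ≤ muT ∧ t = b01/D1 + b0T/DT},
        (1/DT - c * (1/DT - 1/D1)) * (1 - muR) - c * (1/D1 - 1/DT) * muT ≤ t := by
      rintro t ⟨b01, b0T, bR0, bRT, h01, h0T, hR0, hRT, hsum, hmR, hmT, rfl⟩
      have hkey0 : 1 - muR - muT ≤ b01 - b01/(NT:ℝ) := by linarith
      have e : c * (b01 - b01/(NT:ℝ)) = b01 := by
        rw [hcdef]; field_simp
      have hkey : c * (1 - muR - muT) ≤ b01 :=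
        (mul_le_mul_of_nonneg_left hkey0 hc0.le).trans_eq e
      have k1 : (1/D1 - 1/DT) * (c * (1 - muR - muT)) ≤ (1/D1 - 1/DT) * b01 :=
        mul_le_mul_of_nonneg_left hkey (by linarith)
      have k2 : (1 - muR) * (1/DT) ≤ (b01 + b0T) * (1/DT) :=
        mul_le_mul_of_nonneg_right (by linarith) hA.le
      rw [div_eq_mul_one_div b01 D1, div_eq_mul_one_div b0T DT]
      linarith [k1, k2]
    exact le_antisymm (csInf_le ⟨_, lb⟩ mem) (le_csInf ⟨_, mem⟩ lb)
end

section
/- Let M, N, N_T, N_R be positive integers with N_T ≥ 2, N_R ≥ 2 and N·N_R ≤ M. Then for every (μ_R, μ_T) ∈ R1 ∪ R2, the achievable NDT expression equals the lower bound: τ_gen(μ_R, μ_T) = max{ (1/N)(1 − μ_R), max_{s ∈ {1,...,N_R}} (s/(N_T·M))(1 − s·μ_R) } = (1/N)(1 − μ_R). -/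
open Finset

/-- If `N·N_R ≤ M`, then for every `(μ_R, μ_T) ∈ R1 ∪ R2`, the
achievable NDT equals the lower bound:
`τ_gen(μ_R,μ_T) = max{ (1/N)(1−μ_R), max_{s∈{1,…,N_R}} (s/(N_T M))(1−s μ_R) } = (1/N)(1−μ_R)`. -/
theorem gen_optimal_small_N (M N NT NR : ℕ) (hM : 0 < M) (hN : 0 < N)
    (hNT : 2 ≤ NT) (hNR : 2 ≤ NR) (hcond : N * NR ≤ M)
    (muR muT : ℝ) (h : regR1 muR muT ∨ regR2 NT muR muT) :
    tauGen M N NT NR muR muT = tauLGen M N NT NR (by omega) muR ∧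
    tauGen M N NT NR muR muT = (1/(N : ℝ)) * (1 - muR) := by
  have hNr : (1:ℝ) ≤ N := by exact_mod_cast hN
  have hMr : (1:ℝ) ≤ M := by exact_mod_cast hM
  have hNTr : (2:ℝ) ≤ NT := by exact_mod_cast hNT
  have hNRr : (2:ℝ) ≤ NR := by exact_mod_cast hNR
  have hcondr : (N:ℝ) * NR ≤ M := by exact_mod_cast hcond
  -- bounds on muR
  have hmuR0 : 0 ≤ muR := by rcases h with ⟨_, h2, _⟩ | ⟨_, h2, _⟩ <;> exact h2
  have hmuR1 : muR ≤ 1 := by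
    rcases h with ⟨_, _, h3, _⟩ | ⟨hlt, _, _, hNTmu⟩
    · exact h3
    · have hmuT : 0 < muT := by nlinarith
      linarith
  -- d0NT = N
  have hd0 : d0NTgen M N NT NR = N := by
    unfold d0NTgen
    apply min_eq_right
    rw [le_div_iff₀ (by linarith)]
    nlinarith
  -- d01 = N
  have hMN : ¬ M ≤ N := by
    have : N * 2 ≤ N * NR := Nat.mul_le_mul_left N hNR
    omega
  have hq : NR ≤ M / N := (Nat.le_div_iff_mul_le hN).mpr (by rw [Nat.mul_comm]; exact hcond)
  have hqr : (NR:ℝ) ≤ ((M/N : ℕ) : ℝ) := by exact_mod_cast hq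
  have hd01 : d01gen M N NT NR = N := by
    unfold d01gen
    rw [if_neg hMN]
    apply min_eq_left
    rw [le_div_iff₀ (by nlinarith)]
    nlinarith
  -- tauGen = (1/N)(1-muR)
  have htau : tauGen M N NT NR muR muT = (1/(N : ℝ)) * (1 - muR) := by
    unfold tauGen
    rw [hd0, hd01]
    split_ifs <;> ring
  -- tauLGen = (1/N)(1-muR)
  have htauL : tauLGen M N NT NR (by omega) muR = (1/(N : ℝ)) * (1 - muR) := by
    unfold tauLGen
    apply max_eq_left
    apply Finset.sup'_le
    intro s hs
    rw [Finset.mem_Icc] at hs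
    have hs1 : (1:ℝ) ≤ s := by exact_mod_cast hs.1
    have hsNR : (s:ℝ) ≤ NR := by exact_mod_cast hs.2
    rw [div_mul_eq_mul_div, div_le_iff₀ (by nlinarith), one_div, inv_mul_eq_div,
      div_mul_eq_mul_div, le_div_iff₀ (by linarith)]
    have h1 : 0 ≤ muR * (s:ℝ) * ((s:ℝ) - 1) * N :=
      mul_nonneg (mul_nonneg (mul_nonneg hmuR0 (by linarith)) (by linarith)) (by linarith)
    have hsN : (s:ℝ) * N ≤ NT * M := by nlinarith
    have h2 : 0 ≤ (1 - muR) * ((NT:ℝ) * M - (s:ℝ) * N) :=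
      mul_nonneg (by linarith) (by linarith)
    nlinarith
  exact ⟨htau.trans htauL.symm, htau⟩
end
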